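/- Let p be an odd prime and α in F_p such that α² + 4 ≠ 0 in F_p. Work in a field extension K of F_p containing a square root s of α² + 4, and set z₊ = (-α + s)/2, z₋ = (-α - s)/2. Then z₊ ≠ z₋, z₊·z₋ = -1, and for all n, m with n > m ≥ 1, if F_n(α)·F_{m-1}(α) = F_{n-1}(α)·F_m(α) in F_p then (z₊/z₋)^{n-m} = 1 in K, where F_k denotes the Fibonacci polynomial sequence at α. -/

import Mathlib

theorem stmt_18 (p : ℕ) (hp : p.Prime) (hodd : Odd p) (α : ZMod p)
    (hα : α ^ 2 + 4 ≠ 0)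
    (K : Type*) [Field K] [Algebra (ZMod p) K]
    (s : K) (hs : s ^ 2 = algebraMap (ZMod p) K (α ^ 2 + 4))
    (zp zm : K) (hzp : zp = (-(algebraMap (ZMod p) K α) + s) / 2)
    (hzm : zm = (-(algebraMap (ZMod p) K α) - s) / 2)
    (F : ℕ → ZMod p) (hF0 : F 0 = 0) (hF1 : F 1 = 1)
    (hFrec : ∀ k, F (k + 2) = α * F (k + 1) + F k) :
    zp ≠ zm ∧ zp * zm = -1 ∧
      ∀ n m : ℕ, m < n → 1 ≤ m →
        F n * F (m - 1) = F (n - 1) * F m → (zp / zm) ^ (n - m) = 1 := by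
  haveI := Fact.mk hp
  set g := algebraMap (ZMod p) K with hg
  have hinj : Function.Injective g := (algebraMap (ZMod p) K).injective
  have hp2 : p ≠ 2 := by rcases hodd with ⟨t, ht⟩; omega
  have h2 : (2 : ZMod p) ≠ 0 := by
    intro h
    have h' : ((2 : ℕ) : ZMod p) = 0 := by push_cast; exact h
    rw [ZMod.natCast_eq_zero_iff] at h'
    exact hp2 ((Nat.prime_dvd_prime_iff_eq hp Nat.prime_two).mp h')
  have hK2 : (2 : K) ≠ 0 := by
    intro h
    apply h2
    apply hinj
    rw [map_ofNat, map_zero]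
    exact h
  have hs' : s ^ 2 = g α ^ 2 + 4 := by
    rw [hs, map_add, map_pow, map_ofNat]
  have hs0 : s ≠ 0 := by
    intro h
    apply hα
    apply hinj
    rw [map_zero, ← hs, h]
    ring
  obtain ⟨a, ha_def⟩ : ∃ a : K, a = (g α + s) / 2 := ⟨_, rfl⟩
  obtain ⟨b, hb_def⟩ : ∃ b : K, b = (g α - s) / 2 := ⟨_, rfl⟩
  have hab : a - b = s := by rw [ha_def, hb_def]; field_simp; ring
  have hzp' : zp = -b := by rw [hzp, hb_def]; ring
  have hzm' : zm = -a := by rw [hzm, ha_def]; ring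
  have habm : a * b = -1 := by
    rw [ha_def, hb_def]
    field_simp
    linear_combination -hs'
  have ha0 : a ≠ 0 := by
    intro h
    rw [h, zero_mul] at habm
    exact zero_ne_one (by linear_combination -habm)
  have hb0 : b ≠ 0 := by
    intro h
    rw [h, mul_zero] at habm
    exact zero_ne_one (by linear_combination -habm)
  have ha2 : a ^ 2 = g α * a + 1 := by
    rw [ha_def]
    field_simp
    linear_combination hs'
  have hb2 : b ^ 2 = g α * b + 1 := by
    rw [hb_def]
    field_simp
    linear_combination hs'
  -- Binet
  have binet : ∀ k, s * g (F k) = a ^ k - b ^ k := by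
    have key : ∀ k, s * g (F k) = a ^ k - b ^ k ∧
        s * g (F (k + 1)) = a ^ (k + 1) - b ^ (k + 1) := by
      intro k
      induction k with
      | zero =>
        constructor
        · simp [hF0]
        · simp [hF1, hab]
      | succ n ih =>
        refine ⟨ih.2, ?_⟩
        rw [hFrec n, map_add, map_mul]
        linear_combination g α * ih.2 + ih.1 - a ^ n * ha2 + b ^ n * hb2
    exact fun k => (key k).1
  refine ⟨?_, ?_, ?_⟩
  · intro h
    apply hs0
    rw [← hab]
    rw [hzp', hzm'] at h
    linear_combination h
  · rw [hzp', hzm']; linear_combination habm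
  · intro n m hmn hm heq
    obtain ⟨m', rfl⟩ : ∃ m', m = m' + 1 := ⟨m - 1, by omega⟩
    obtain ⟨k, rfl⟩ : ∃ k, n = m' + 1 + (k + 1) := ⟨n - m' - 2, by omega⟩
    have e1 : m' + 1 + (k + 1) = m' + k + 2 := by omega
    have e2 : m' + k + 2 - 1 = m' + k + 1 := by omega
    have e3 : m' + 1 - 1 = m' := by omega
    have e4 : m' + 1 + (k + 1) - (m' + 1) = k + 1 := by omega
    rw [e1, e3, e2] at heq
    have hK := congrArg g heq
    rw [map_mul, map_mul] at hK
    have E : (a ^ (m' + k + 2) - b ^ (m' + k + 2)) * (a ^ m' - b ^ m') =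
        (a ^ (m' + k + 1) - b ^ (m' + k + 1)) * (a ^ (m' + 1) - b ^ (m' + 1)) := by
      rw [← binet (m' + k + 2), ← binet m', ← binet (m' + k + 1), ← binet (m' + 1)]
      linear_combination s ^ 2 * hK
    have key : a ^ m' * b ^ m' * (a - b) * (b ^ (k + 1) - a ^ (k + 1)) = 0 := by
      linear_combination E
    have hsub : b ^ (k + 1) - a ^ (k + 1) = 0 := by
      rcases mul_eq_zero.mp key with h | h
      · exact absurd h (mul_ne_zero
          (mul_ne_zero (pow_ne_zero _ ha0) (pow_ne_zero _ hb0)) (hab ▸ hs0))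
      · exact h
    have hba : b ^ (k + 1) = a ^ (k + 1) := sub_eq_zero.mp hsub
    rw [e4, hzp', hzm', neg_div_neg_eq, div_pow, hba,
      div_self (pow_ne_zero _ ha0)]
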